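/- arXiv:2006.05118 — 2 statements merged into one kernel-verified Lean document; each statement's English description precedes it below -/
import Mathlib

section
/- Let N ≥ 1 and let G = (g_1,...,g_N) : [0,1]^N → ℝ^N be continuous. Assume: (a) for each j, g_j(x) = 0 whenever x_j = 0; (b) for each j, g_j(x) > 0 whenever x_j ≠ 0; (c) G is order-preserving, i.e. G(x) ≥ G(y) componentwise whenever x ≥ y componentwise in [0,1]^N. Then there exists η* > 0 such that the cube [0,η*]^N is contained in the image G([0,1]^N). -/
open Finset

-- parity of a finset admitting a fixed-point-free involution
lemma even_card_of_invol {α : Type*} [DecidableEq α] (s : Finset α) (f : α → α)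
    (hmem : ∀ a ∈ s, f a ∈ s) (hinv : ∀ a ∈ s, f (f a) = a) (hne : ∀ a ∈ s, f a ≠ a) :
    Even s.card := by
  suffices h : ∀ (n : ℕ) (s : Finset α), (∀ a ∈ s, f a ∈ s) → (∀ a ∈ s, f (f a) = a) →
      (∀ a ∈ s, f a ≠ a) → s.card = n → Even s.card by
    exact h s.card s hmem hinv hne rfl
  clear hmem hinv hne s
  intro n
  induction n using Nat.strong_induction_on with
  | _ n ih =>
    intro s hmem hinv hne hn
    rcases s.eq_empty_or_nonempty with rfl | ⟨a, ha⟩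
    · simp at hn; simp [← hn]
    · have hfa := hmem a ha
      set t := s \ {a, f a} with ht
      have hsub : {a, f a} ⊆ s := by
        intro x hx; simp at hx; rcases hx with rfl | rfl <;> [exact ha; exact hfa]
      have hcard2 : ({a, f a} : Finset α).card = 2 := by
        rw [card_insert_of_notMem (by simp [Ne.symm (hne a ha)]), card_singleton]
      have htcard : t.card + 2 = n := by
        rw [ht, card_sdiff_of_subset hsub, hcard2]
        have := card_le_card hsub
        omega
      have hmem' : ∀ b ∈ t, f b ∈ t := by
        intro b hb
        rw [ht, mem_sdiff] at hb ⊢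
        obtain ⟨hbs, hbn⟩ := hb
        simp only [mem_insert, mem_singleton] at hbn
        push_neg at hbn
        refine ⟨hmem b hbs, ?_⟩
        simp only [mem_insert, mem_singleton]
        push_neg
        constructor
        · intro h; exact hbn.2 (by rw [← h, hinv b hbs])
        · intro h
          have : f (f b) = f (f a) := by rw [h]
          rw [hinv b hbs, hinv a ha] at this
          exact hbn.1 this
      have hinv' : ∀ b ∈ t, f (f b) = b := fun b hb => hinv b (mem_sdiff.mp hb).1
      have hne' : ∀ b ∈ t, f b ≠ b := fun b hb => hne b (mem_sdiff.mp hb).1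
      have : Even t.card := ih t.card (by omega) t hmem' hinv' hne' rfl
      rw [hn, ← htcard]
      rcases this with ⟨k, hk⟩
      exact ⟨k+1, by omega⟩



open scoped Classical

abbrev Splx (n M : ℕ) := (Fin n → Fin M) × Equiv.Perm (Fin n)

def vert {n M : ℕ} (S : Splx n M) (k : Fin (n+1)) : Fin n → ℕ :=
  fun j => (S.1 j : ℕ) + if ((S.2.symm j : ℕ) < (k : ℕ)) then 1 else 0

def IsFull {n M : ℕ} (label : (Fin n → ℕ) → ℕ) (S : Splx n M) : Prop :=
  ∀ m < n + 1, ∃ k : Fin (n+1), label (vert S k) = m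

def IsDoor {n M : ℕ} (label : (Fin n → ℕ) → ℕ) (S : Splx n M) (k : Fin (n+1)) : Prop :=
  ∀ m < n, ∃ i, i ≠ k ∧ label (vert S i) = m

lemma odd_doorCount_iff {n M : ℕ} (label : (Fin n → ℕ) → ℕ)
    (Hlt : ∀ v, label v ≤ n) (S : Splx n M) :
    Odd (univ.filter (fun k => IsDoor label S k)).card ↔ IsFull label S := by
  set L : Fin (n+1) → ℕ := fun k => label (vert S k) with hLdef
  have hL : ∀ k, L k ≤ n := fun k => Hlt _
  by_cases hfull : IsFull label S
  · -- full case : exactly one door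
    simp only [hfull, iff_true]
    set Lf : Fin (n+1) → Fin (n+1) := fun k => ⟨L k, by have := hL k; omega⟩ with hLf
    have hsurj : Function.Surjective Lf := by
      intro m
      obtain ⟨k, hk⟩ := hfull m.val m.isLt
      refine ⟨k, Fin.ext ?_⟩
      exact hk
    have hinj : Function.Injective Lf := Finite.injective_iff_surjective.mpr hsurj
    obtain ⟨k₀, hk₀⟩ := hsurj (Fin.last n)
    have hk₀' : L k₀ = n := congrArg Fin.val hk₀
    have hset : univ.filter (fun k => IsDoor label S k) = {k₀} := by
      ext k
      simp only [mem_filter, mem_univ, true_and, mem_singleton]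
      constructor
      · intro hdoor
        by_contra hne
        have hkn : L k ≠ n := by
          intro h
          exact hne (hinj (Fin.ext (h.trans hk₀'.symm)))
        have hlt : L k < n := lt_of_le_of_ne (hL k) hkn
        obtain ⟨i, hik, hi⟩ := hdoor (L k) hlt
        exact hik (hinj (Fin.ext hi))
      · rintro rfl
        intro m hm
        obtain ⟨i, hi⟩ := hfull m (by omega)
        refine ⟨i, ?_, hi⟩
        rintro rfl
        have hmn : m = n := by rw [← hi]; exact hk₀'
        omega
    rw [hset, card_singleton]
    exact ⟨0, rfl⟩
  · -- not full : door count is even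
    simp only [hfull, iff_false]
    rw [Nat.not_odd_iff_even]
    simp only [IsFull, not_forall] at hfull
    obtain ⟨m₀, hm₀lt, hm₀⟩ := hfull
    push_neg at hm₀
    by_cases hall : ∀ m < n, ∃ k, L k = m
    · -- all m < n attained, so n is the unattained value
      have hLn : ∀ k, L k ≠ n := by
        intro k
        have hm₀n : m₀ = n := by
          by_contra h
          obtain ⟨k', hk'⟩ := hall m₀ (by omega)
          exact hm₀ k' hk'
        rw [← hm₀n]; exact hm₀ k
      have hLlt : ∀ k, L k < n := fun k => lt_of_le_of_ne (hL k) (hLn k)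
      set c : ℕ → ℕ := fun m => (univ.filter (fun k => L k = m)).card with hc
      have hsum : ∑ m ∈ range n, c m = n + 1 := by
        have h := Finset.card_eq_sum_card_fiberwise
          (f := L) (s := (univ : Finset (Fin (n+1)))) (t := range n)
          (fun k _ => mem_range.mpr (hLlt k))
        simp only [card_univ, Fintype.card_fin] at h
        exact h.symm
      have hone : ∀ m ∈ range n, 1 ≤ c m := by
        intro m hm
        obtain ⟨k, hk⟩ := hall m (mem_range.mp hm)
        refine card_pos.mpr ⟨k, ?_⟩
        simp only [mem_filter, mem_univ, true_and]
        exact hk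
      have hex : ∃ ms ∈ range n, 1 < c ms := by
        by_contra h
        push_neg at h
        have hle : ∑ m ∈ range n, c m ≤ ∑ _m ∈ range n, 1 := sum_le_sum (fun m hm => h m hm)
        simp only [sum_const, card_range, smul_eq_mul, mul_one] at hle
        omega
      obtain ⟨ms, hms, hms2⟩ := hex
      have hsum_erase : ∑ m ∈ (range n).erase ms, c m + c ms = n + 1 := by
        rw [Finset.sum_erase_add _ _ hms]; exact hsum
      have herase_ge : (n - 1) ≤ ∑ m ∈ (range n).erase ms, c m := by
        have h := Finset.card_nsmul_le_sum ((range n).erase ms) c 1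
          (fun m hm => hone m (mem_of_mem_erase hm))
        simpa [Finset.card_erase_of_mem hms] using h
      have hcms : c ms = 2 := by omega
      have hcother : ∀ m ∈ range n, m ≠ ms → c m = 1 := by
        intro m hm hne
        by_contra h
        have h2 : 2 ≤ c m := by have := hone m hm; omega
        have hmem' : m ∈ (range n).erase ms := mem_erase.mpr ⟨hne, hm⟩
        have hsplit : ∑ x ∈ ((range n).erase ms).erase m, c x + c m
            = ∑ m ∈ (range n).erase ms, c m :=
          Finset.sum_erase_add _ _ hmem'
        have hge2 : (n - 2) ≤ ∑ x ∈ ((range n).erase ms).erase m, c x := by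
          have h3 := Finset.card_nsmul_le_sum (((range n).erase ms).erase m) c 1
            (fun x hx => hone x (mem_of_mem_erase (mem_of_mem_erase hx)))
          have h4 : (((range n).erase ms).erase m).card = n - 2 := by
            rw [Finset.card_erase_of_mem hmem', Finset.card_erase_of_mem hms, card_range]
            omega
          rw [h4] at h3
          simpa using h3
        have hn2 : 2 ≤ n := by
          have := mem_range.mp hms
          have := mem_range.mp hm
          omega
        omega
      have hdoors : univ.filter (fun k => IsDoor label S k)
          = univ.filter (fun k => L k = ms) := by
        ext k
        simp only [mem_filter, mem_univ, true_and]
        constructor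
        · intro hdoor
          by_contra hne
          obtain ⟨i, hik, hi⟩ := hdoor (L k) (hLlt k)
          have h2 : 2 ≤ c (L k) := by
            have hsub : ({i, k} : Finset (Fin (n+1))) ⊆ univ.filter (fun k' => L k' = L k) := by
              intro x hx
              simp only [mem_insert, mem_singleton] at hx
              simp only [mem_filter, mem_univ, true_and]
              rcases hx with rfl | rfl
              · exact hi
              · rfl
            have hcard : ({i, k} : Finset (Fin (n+1))).card ≤ c (L k) := card_le_card hsub
            rwa [card_insert_of_notMem (by simpa using hik), card_singleton] at hcard
          have := hcother (L k) (mem_range.mpr (hLlt k)) hne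
          omega
        · intro hk m hm
          have hfib2 : 1 < (univ.filter (fun k' => L k' = ms)).card := hms2
          obtain ⟨i, hi_mem, hik⟩ := Finset.exists_mem_ne hfib2 k
          simp only [mem_filter, mem_univ, true_and] at hi_mem
          by_cases hmk : m = L k
          · exact ⟨i, hik, by rw [hmk, hk, ← hi_mem]⟩
          · obtain ⟨i', hi'⟩ := hall m hm
            refine ⟨i', ?_, hi'⟩
            rintro rfl
            exact hmk hi'.symm
      rw [hdoors]
      have h2' : (univ.filter (fun k => L k = ms)).card = 2 := hcms
      rw [h2']
      exact ⟨1, rfl⟩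
    · -- some m < n not attained : no doors
      push_neg at hall
      obtain ⟨m₁, hm₁lt, hm₁⟩ := hall
      have hempty : univ.filter (fun k => IsDoor label S k) = ∅ := by
        ext k
        simp only [mem_filter, mem_univ, true_and, notMem_empty, iff_false]
        intro hdoor
        obtain ⟨i, _, hi⟩ := hdoor m₁ hm₁lt
        exact hm₁ i hi
      rw [hempty]
      simp

section Pivot

variable {n M : ℕ}

-- middle pivot: swap two adjacent positions
lemma vert_swap (S : Splx (n+1) M) (a b : Fin (n+1)) (hab : (a:ℕ) + 1 = (b:ℕ))
    (k i : Fin (n+2)) (hbk : (b:ℕ) = (k:ℕ)) (hik : i ≠ k) :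
    vert (S.1, (Equiv.swap a b).trans S.2) i = vert S i := by
  funext j
  show (S.1 j : ℕ) + _ = (S.1 j : ℕ) + _
  congr 1
  have hsymm : ((Equiv.swap a b).trans S.2).symm j = Equiv.swap a b (S.2.symm j) := by
    simp [Equiv.symm_apply_eq, Equiv.swap_apply_self]
  rw [hsymm]
  have hvik : (i : ℕ) ≠ (k : ℕ) := fun h => hik (Fin.ext h)
  rcases eq_or_ne (S.2.symm j) a with h | h
  · rw [h, Equiv.swap_apply_left]
    have : (a:ℕ) < (i:ℕ) ↔ (b:ℕ) < (i:ℕ) := by omega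
    simp only [this]
  · rcases eq_or_ne (S.2.symm j) b with h' | h'
    · rw [h', Equiv.swap_apply_right]
      have : (b:ℕ) < (i:ℕ) ↔ (a:ℕ) < (i:ℕ) := by omega
      simp only [this]
    · rw [Equiv.swap_apply_of_ne_of_ne h h']

-- rotate-up pivot (dropped vertex 0)
lemma vert_rotup (S : Splx (n+1) M) (h : (S.1 (S.2 0) : ℕ) + 1 < M)
    (i : Fin (n+2)) (hi : i ≠ Fin.last (n+1)) :
    vert (Function.update S.1 (S.2 0) ⟨(S.1 (S.2 0) : ℕ) + 1, h⟩,
      (finRotate (n+1)).trans S.2) i = vert S (i+1) := by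
  have hival : (i : ℕ) < n + 1 := by
    have := i.isLt
    have : (i:ℕ) ≠ n+1 := fun hh => hi (Fin.ext (by simp [hh, Fin.last]))
    omega
  have hip1 : ((i+1 : Fin (n+2)) : ℕ) = (i:ℕ) + 1 := by
    rw [Fin.val_add_one]
    simp only [if_neg hi]
  funext j
  have hver : vert (Function.update S.1 (S.2 0) ⟨(S.1 (S.2 0) : ℕ) + 1, h⟩,
      (finRotate (n+1)).trans S.2) i j
      = (Function.update S.1 (S.2 0) ⟨(S.1 (S.2 0) : ℕ) + 1, h⟩ j : ℕ)
        + if (((finRotate (n+1)).symm (S.2.symm j) : ℕ)) < (i : ℕ) then 1 else 0 := rfl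
  have hver2 : vert S (i+1) j
      = (S.1 j : ℕ) + if ((S.2.symm j : ℕ)) < ((i+1 : Fin (n+2)) : ℕ) then 1 else 0 := rfl
  rw [hver, hver2]
  rcases eq_or_ne j (S.2 0) with hj | hj
  · -- the updated coordinate
    have hm : S.2.symm j = 0 := by rw [hj]; simp
    rw [hj, Function.update_self]
    simp only [Equiv.symm_apply_apply]
    have h1 : ((finRotate (n+1)).symm (0 : Fin (n+1)) : ℕ) = n := by
      have : finRotate (n+1) (Fin.last n) = 0 := by
        rw [finRotate_succ_apply, Fin.last_add_one]
      rw [show (0 : Fin (n+1)) = finRotate (n+1) (Fin.last n) from this.symm,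
        Equiv.symm_apply_apply, Fin.val_last]
    rw [h1]
    have hc1 : ¬ (n < (i:ℕ)) := by omega
    simp only [if_neg hc1, hip1, Fin.val_zero]
    simp only [if_pos (Nat.succ_pos _)]
  · have hm : S.2.symm j ≠ 0 := by
      intro hh
      exact hj (by rw [← Equiv.apply_symm_apply S.2 j, hh])
    rw [Function.update_of_ne hj]
    congr 1
    have hmv : ((finRotate (n+1)).symm (S.2.symm j) : ℕ) = (S.2.symm j : ℕ) - 1 := by
      set m := S.2.symm j
      set m' := (finRotate (n+1)).symm m with hm'
      have happ : finRotate (n+1) m' = m := Equiv.apply_symm_apply _ _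
      rw [finRotate_succ_apply] at happ
      have hm'last : m' ≠ Fin.last n := by
        intro hh
        rw [hh, Fin.last_add_one] at happ
        exact hm happ.symm
      have : (m' : ℕ) + 1 = (m : ℕ) := by
        rw [← happ, Fin.val_add_one, if_neg hm'last]
      omega
    rw [show ((finRotate (n+1)).symm (S.2.symm j) : ℕ) = (S.2.symm j : ℕ) - 1 from hmv, hip1]
    have hm1 : 1 ≤ (S.2.symm j : ℕ) := by
      have : (S.2.symm j : ℕ) ≠ 0 := fun hh => hm (Fin.ext hh)
      omega
    by_cases hcase : ((S.2.symm j : ℕ) - 1) < (i:ℕ) <;>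
      [ (rw [if_pos hcase, if_pos (by omega)]) ; (rw [if_neg hcase, if_neg (by omega)]) ]

-- rotate-down pivot (dropped vertex n+1)
lemma vert_rotdown (S : Splx (n+1) M) (h : 0 < (S.1 (S.2 (Fin.last n)) : ℕ))
    (i : Fin (n+2)) (hi : i ≠ 0) :
    vert (Function.update S.1 (S.2 (Fin.last n))
        ⟨(S.1 (S.2 (Fin.last n)) : ℕ) - 1, by
          have := (S.1 (S.2 (Fin.last n))).isLt; omega⟩,
      (finRotate (n+1)).symm.trans S.2) i = vert S (i-1) := by
  have hival : 1 ≤ (i : ℕ) := by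
    have : (i:ℕ) ≠ 0 := fun hh => hi (Fin.ext (by simp [hh]))
    omega
  have him1 : ((i-1 : Fin (n+2)) : ℕ) = (i:ℕ) - 1 := by
    rw [Fin.coe_sub_one, if_neg hi]
  funext j
  have hver : vert (Function.update S.1 (S.2 (Fin.last n))
        ⟨(S.1 (S.2 (Fin.last n)) : ℕ) - 1, by
          have := (S.1 (S.2 (Fin.last n))).isLt; omega⟩,
      (finRotate (n+1)).symm.trans S.2) i j
      = (Function.update S.1 (S.2 (Fin.last n))
          ⟨(S.1 (S.2 (Fin.last n)) : ℕ) - 1, by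
            have := (S.1 (S.2 (Fin.last n))).isLt; omega⟩ j : ℕ)
        + if ((finRotate (n+1) (S.2.symm j) : ℕ)) < (i : ℕ) then 1 else 0 := rfl
  have hver2 : vert S (i-1) j
      = (S.1 j : ℕ) + if ((S.2.symm j : ℕ)) < ((i-1 : Fin (n+2)) : ℕ) then 1 else 0 := rfl
  rw [hver, hver2]
  rcases eq_or_ne j (S.2 (Fin.last n)) with hj | hj
  · have hm : S.2.symm j = Fin.last n := by rw [hj]; simp
    rw [hj, Function.update_self]
    simp only [Equiv.symm_apply_apply]
    rw [finRotate_succ_apply, Fin.last_add_one]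
    have hc1 : (0:ℕ) < (i:ℕ) := by omega
    have hc2 : ¬ ((Fin.last n : ℕ) < ((i-1:Fin (n+2)):ℕ)) := by
      rw [him1, Fin.val_last]
      have := i.isLt
      omega
    rw [if_neg hc2]
    rw [Fin.val_zero, if_pos hc1]
    have hpos := h
    omega
  · have hm : S.2.symm j ≠ Fin.last n := by
      intro hh
      exact hj (by rw [← Equiv.apply_symm_apply S.2 j, hh])
    rw [Function.update_of_ne hj]
    congr 1
    rw [finRotate_succ_apply, Fin.val_add_one, if_neg hm, him1]
    have := (S.2.symm j).isLt
    by_cases hcase : ((S.2.symm j : ℕ) + 1) < (i:ℕ) <;>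
      [ (rw [if_pos hcase, if_pos (by omega)]) ; (rw [if_neg hcase, if_neg (by omega)]) ]

end Pivot
section Step

variable {n M : ℕ}

lemma fin_vne {m : ℕ} {a b : Fin m} (h : (a:ℕ) ≠ (b:ℕ)) : a ≠ b :=
  fun hh => h (congrArg Fin.val hh)

def pivotJ (n M : ℕ) (z : Splx (n+1) M × Fin (n+2)) : Splx (n+1) M × Fin (n+2) :=
  if _h0 : (z.2 : ℕ) = 0 then
    if h : ((z.1.1 (z.1.2 0) : ℕ) + 1) < M then
      ((Function.update z.1.1 (z.1.2 0) ⟨(z.1.1 (z.1.2 0) : ℕ) + 1, h⟩,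
        (finRotate (n+1)).trans z.1.2), Fin.last (n+1))
    else z
  else if _hN : (z.2 : ℕ) = n + 1 then
    if h : 0 < (z.1.1 (z.1.2 (Fin.last n)) : ℕ) then
      ((Function.update z.1.1 (z.1.2 (Fin.last n))
          ⟨(z.1.1 (z.1.2 (Fin.last n)) : ℕ) - 1,
            by have := (z.1.1 (z.1.2 (Fin.last n))).isLt; omega⟩,
        (finRotate (n+1)).symm.trans z.1.2), 0)
    else z
  else
    ((z.1.1, (Equiv.swap (⟨(z.2:ℕ) - 1, by have := z.2.isLt; omega⟩ : Fin (n+1))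
        (⟨(z.2:ℕ), by have := z.2.isLt; omega⟩ : Fin (n+1))).trans z.1.2), z.2)

variable (label : (Fin (n+1) → ℕ) → ℕ)

lemma guard_up (H1 : ∀ v (j : Fin (n+1)), v j = M → 1 ≤ label v)
    (S : Splx (n+1) M) (k : Fin (n+2)) (hk : (k:ℕ) = 0)
    (hd : IsDoor label S k) : (S.1 (S.2 0) : ℕ) + 1 < M := by
  obtain ⟨i, hik, hi⟩ := hd 0 (Nat.succ_pos n)
  have hi1 : 1 ≤ (i:ℕ) := by
    rcases Nat.eq_zero_or_pos (i:ℕ) with h | h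
    · exact absurd (Fin.ext (by rw [h, hk])) hik
    · exact h
  have hv : vert S i (S.2 0) = (S.1 (S.2 0) : ℕ) + 1 := by
    show (S.1 (S.2 0) : ℕ) + (if ((S.2.symm (S.2 0) : ℕ) < (i:ℕ)) then 1 else 0) = _
    simp only [Equiv.symm_apply_apply, Fin.val_zero]
    rw [if_pos (by omega)]
  have hlt := (S.1 (S.2 0)).isLt
  rcases lt_or_eq_of_le (Nat.succ_le_of_lt hlt) with h | h
  · exact h
  · exfalso
    have := H1 (vert S i) (S.2 0) (by rw [hv]; omega)
    omega

lemma down_bd (H0 : ∀ v (j : Fin (n+1)), v j = 0 → label v ≠ (j:ℕ)+1)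
    (S : Splx (n+1) M) (k : Fin (n+2)) (hk : (k:ℕ) = n+1)
    (hd : IsDoor label S k) (hz : (S.1 (S.2 (Fin.last n)) : ℕ) = 0) :
    S.2 (Fin.last n) = Fin.last n := by
  by_contra hb
  have hbv : (S.2 (Fin.last n) : ℕ) < n := by
    have h1 := (S.2 (Fin.last n)).isLt
    have h2 : (S.2 (Fin.last n) : ℕ) ≠ n := by
      intro h
      exact hb (Fin.ext (by rw [h, Fin.val_last]))
    omega
  obtain ⟨i, hik, hi⟩ := hd ((S.2 (Fin.last n) : ℕ) + 1) (by omega)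
  have hiv : (i:ℕ) ≤ n := by
    have h1 := i.isLt
    have h2 : (i:ℕ) ≠ n+1 := by
      intro h
      exact hik (Fin.ext (by rw [h, hk]))
    omega
  have hv : vert S i (S.2 (Fin.last n)) = 0 := by
    show (S.1 (S.2 (Fin.last n)) : ℕ)
        + (if ((S.2.symm (S.2 (Fin.last n)) : ℕ) < (i:ℕ)) then 1 else 0) = 0
    simp only [Equiv.symm_apply_apply, Fin.val_last]
    rw [if_neg (by omega), hz]
  exact H0 (vert S i) (S.2 (Fin.last n)) hv hi

lemma door_swap (S : Splx (n+1) M) (k : Fin (n+2)) (h1 : 0 < (k:ℕ)) (h2 : (k:ℕ) < n+1)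
    (hd : IsDoor label S k) :
    IsDoor label (S.1, (Equiv.swap (⟨(k:ℕ) - 1, by have := k.isLt; omega⟩ : Fin (n+1))
        (⟨(k:ℕ), h2⟩ : Fin (n+1))).trans S.2) k := by
  intro m hm
  obtain ⟨i, hik, hi⟩ := hd m hm
  refine ⟨i, hik, ?_⟩
  rw [vert_swap S _ _ (by simp; omega) k i (by simp) hik]
  exact hi

lemma door_up (S : Splx (n+1) M) (k : Fin (n+2)) (hk : (k:ℕ) = 0)
    (h : ((S.1 (S.2 0) : ℕ) + 1) < M) (hd : IsDoor label S k) :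
    IsDoor label (Function.update S.1 (S.2 0) ⟨(S.1 (S.2 0) : ℕ) + 1, h⟩,
      (finRotate (n+1)).trans S.2) (Fin.last (n+1)) := by
  intro m hm
  obtain ⟨i, hik, hi⟩ := hd m hm
  have hi1 : 1 ≤ (i:ℕ) := by
    rcases Nat.eq_zero_or_pos (i:ℕ) with hh | hh
    · exact absurd (Fin.ext (by rw [hh, hk])) hik
    · exact hh
  have hine : i ≠ 0 := fin_vne (by rw [Fin.val_zero]; omega)
  have him1 : ((i - 1 : Fin (n+2)) : ℕ) = (i:ℕ) - 1 := by
    rw [Fin.coe_sub_one, if_neg hine]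
  refine ⟨i - 1, fin_vne ?_, ?_⟩
  · rw [him1, Fin.val_last]
    have := i.isLt
    omega
  · rw [vert_rotup S h (i-1) (fin_vne (by rw [him1, Fin.val_last]; have := i.isLt; omega))]
    rw [sub_add_cancel]
    exact hi

lemma door_down (S : Splx (n+1) M) (k : Fin (n+2)) (hk : (k:ℕ) = n+1)
    (h : 0 < (S.1 (S.2 (Fin.last n)) : ℕ)) (hd : IsDoor label S k) :
    IsDoor label (Function.update S.1 (S.2 (Fin.last n))
        ⟨(S.1 (S.2 (Fin.last n)) : ℕ) - 1, by
          have := (S.1 (S.2 (Fin.last n))).isLt; omega⟩,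
      (finRotate (n+1)).symm.trans S.2) 0 := by
  intro m hm
  obtain ⟨i, hik, hi⟩ := hd m hm
  have hiv : (i:ℕ) ≤ n := by
    have h1 := i.isLt
    have h2 : (i:ℕ) ≠ n+1 := fun hh => hik (Fin.ext (by rw [hh, hk]))
    omega
  have hip1 : ((i + 1 : Fin (n+2)) : ℕ) = (i:ℕ) + 1 := by
    rw [Fin.val_add_one, if_neg (fin_vne (by rw [Fin.val_last]; omega))]
  refine ⟨i + 1, fin_vne ?_, ?_⟩
  · rw [hip1, Fin.val_zero]; omega
  · rw [vert_rotdown S h (i+1) (fin_vne (by rw [hip1, Fin.val_zero]; omega))]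
    rw [add_sub_cancel_right]
    exact hi

end Step
section Invol

variable {n M : ℕ}

lemma rot_last (π : Equiv.Perm (Fin (n+1))) :
    ((finRotate (n+1)).trans π) (Fin.last n) = π 0 := by
  rw [Equiv.trans_apply, finRotate_succ_apply, Fin.last_add_one]

lemma rotsymm_zero' : (finRotate (n+1)).symm (0 : Fin (n+1)) = Fin.last n := by
  rw [Equiv.symm_apply_eq, finRotate_succ_apply, Fin.last_add_one]

lemma rotsymm_zero (π : Equiv.Perm (Fin (n+1))) :
    ((finRotate (n+1)).symm.trans π) (0 : Fin (n+1)) = π (Fin.last n) := by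
  rw [Equiv.trans_apply, rotsymm_zero']

def Bcond (z : Splx (n+1) M × Fin (n+2)) : Prop :=
  (z.2:ℕ) = n+1 ∧ z.1.2 (Fin.last n) = Fin.last n ∧ (z.1.1 (Fin.last n) : ℕ) = 0

variable (label : (Fin (n+1) → ℕ) → ℕ)

lemma pivot_props
    (H0 : ∀ v (j : Fin (n+1)), v j = 0 → label v ≠ (j:ℕ)+1)
    (H1 : ∀ v (j : Fin (n+1)), v j = M → 1 ≤ label v)
    (z : Splx (n+1) M × Fin (n+2)) (hd : IsDoor label z.1 z.2) (hb : ¬ Bcond z) :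
    (IsDoor label (pivotJ n M z).1 (pivotJ n M z).2 ∧ ¬ Bcond (pivotJ n M z))
      ∧ pivotJ n M (pivotJ n M z) = z ∧ pivotJ n M z ≠ z := by
  rcases Nat.eq_zero_or_pos (z.2 : ℕ) with h0 | hpos
  · -- case k = 0 : rotate up
    have hg : ((z.1.1 (z.1.2 0) : ℕ) + 1) < M := guard_up label H1 z.1 z.2 h0 hd
    have hpz : pivotJ n M z =
        ((Function.update z.1.1 (z.1.2 0) ⟨(z.1.1 (z.1.2 0) : ℕ) + 1, hg⟩,
          (finRotate (n+1)).trans z.1.2), Fin.last (n+1)) := by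
      simp only [pivotJ, dif_pos h0, dif_pos hg]
    have hd' : IsDoor label (pivotJ n M z).1 (pivotJ n M z).2 := by
      rw [hpz]
      exact door_up label z.1 z.2 h0 hg hd
    refine ⟨⟨hd', ?_⟩, ?_, ?_⟩
    · -- new incidence not in B
      rw [hpz]
      rintro ⟨-, hc2, hc3⟩
      simp only at hc2 hc3
      rw [rot_last] at hc2
      rw [← hc2, Function.update_self] at hc3
      simp at hc3
    · -- involution
      rw [hpz]
      have hval : ((Fin.last (n+1) : Fin (n+2)) : ℕ) = n+1 := Fin.val_last _
      have hlastne : ¬ ((Fin.last (n+1) : Fin (n+2)) : ℕ) = 0 := by rw [hval]; omega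
      have hπ' : ((finRotate (n+1)).trans z.1.2) (Fin.last n) = z.1.2 0 := rot_last _
      -- evaluate the guard of the second application
      have hgval : (Function.update z.1.1 (z.1.2 0)
          ⟨(z.1.1 (z.1.2 0) : ℕ) + 1, hg⟩ (((finRotate (n+1)).trans z.1.2) (Fin.last n)) : ℕ)
          = (z.1.1 (z.1.2 0) : ℕ) + 1 := by
        rw [hπ', Function.update_self]
      have hg2 : 0 < (Function.update z.1.1 (z.1.2 0)
          ⟨(z.1.1 (z.1.2 0) : ℕ) + 1, hg⟩ (((finRotate (n+1)).trans z.1.2) (Fin.last n)) : ℕ) := by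
        rw [hgval]; omega
      simp only [pivotJ, dif_neg hlastne, dif_pos hval, dif_pos hg2]
      -- componentwise equality
      refine Prod.ext (Prod.ext ?_ ?_) ?_
      · -- base point
        show Function.update _ _ _ = z.1.1
        funext j
        rw [Function.update_apply]
        split_ifs with hj
        · have hj' : j = z.1.2 0 := by rw [hj, hπ']
          apply Fin.ext
          simp only [hgval]
          rw [hj']
          omega
        · have hj1 : ¬ j = z.1.2 0 := by rw [← hπ']; exact hj
          rw [Function.update_of_ne hj1]
      · -- permutation
        show (finRotate (n+1)).symm.trans ((finRotate (n+1)).trans z.1.2) = z.1.2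
        ext x
        simp only [Equiv.trans_apply]
        rw [Equiv.apply_symm_apply]
      · -- index
        show (0 : Fin (n+2)) = z.2
        exact (Fin.ext (by rw [h0]; rfl)).symm
    · -- not a fixed point
      rw [hpz]
      intro hEq
      have := congrArg (fun w => (w.2 : ℕ)) hEq
      simp only [Fin.val_last] at this
      omega
  · rcases eq_or_ne (z.2 : ℕ) (n+1) with hN | hNne
    swap
    · -- middle case : swap
      have hlt : (z.2 : ℕ) < n + 1 := by have := z.2.isLt; omega
      have hN' : ¬ (z.2 : ℕ) = n + 1 := by omega
      have h0' : ¬ (z.2 : ℕ) = 0 := by omega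
      have hpz : pivotJ n M z =
          ((z.1.1, (Equiv.swap (⟨(z.2:ℕ) - 1, by have := z.2.isLt; omega⟩ : Fin (n+1))
            (⟨(z.2:ℕ), by omega⟩ : Fin (n+1))).trans z.1.2), z.2) := by
        simp only [pivotJ, dif_neg h0', dif_neg hN']
      have hd' : IsDoor label (pivotJ n M z).1 (pivotJ n M z).2 := by
        rw [hpz]
        exact door_swap label z.1 z.2 hpos hlt hd
      refine ⟨⟨hd', ?_⟩, ?_, ?_⟩
      · rw [hpz]
        rintro ⟨hc1, -, -⟩
        exact hN' hc1
      · rw [hpz]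
        simp only [pivotJ, dif_neg h0', dif_neg hN']
        refine Prod.ext (Prod.ext rfl ?_) rfl
        show (Equiv.swap _ _).trans ((Equiv.swap _ _).trans z.1.2) = z.1.2
        ext x
        simp [Equiv.trans_apply, Equiv.swap_apply_self]
      · rw [hpz]
        intro hEq
        have hperm := congrArg (fun w => w.1.2) hEq
        simp only at hperm
        have happ := congrArg (fun (e : Equiv.Perm (Fin (n+1))) =>
          e (⟨(z.2:ℕ) - 1, by have := z.2.isLt; omega⟩ : Fin (n+1))) hperm
        simp only [Equiv.trans_apply, Equiv.swap_apply_left] at happ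
        have := z.1.2.injective happ
        have := congrArg Fin.val this
        simp only at this
        omega
    · -- case k = n+1 : rotate down
      have h0' : ¬ (z.2 : ℕ) = 0 := by omega
      have hg : 0 < (z.1.1 (z.1.2 (Fin.last n)) : ℕ) := by
        by_contra h'
        push_neg at h'
        have hz0 : (z.1.1 (z.1.2 (Fin.last n)) : ℕ) = 0 := by omega
        have hππ := down_bd label H0 z.1 z.2 hN hd hz0
        exact hb ⟨hN, hππ, by rw [← hππ]; exact hz0⟩
      have hpz : pivotJ n M z =
          ((Function.update z.1.1 (z.1.2 (Fin.last n))
            ⟨(z.1.1 (z.1.2 (Fin.last n)) : ℕ) - 1,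
              by have := (z.1.1 (z.1.2 (Fin.last n))).isLt; omega⟩,
          (finRotate (n+1)).symm.trans z.1.2), 0) := by
        simp only [pivotJ, dif_neg h0', dif_pos hN, dif_pos hg]
      have hd' : IsDoor label (pivotJ n M z).1 (pivotJ n M z).2 := by
        rw [hpz]
        exact door_down label z.1 z.2 hN hg hd
      refine ⟨⟨hd', ?_⟩, ?_, ?_⟩
      · rw [hpz]
        rintro ⟨hc1, -, -⟩
        simp only [Fin.val_zero] at hc1
        omega
      · rw [hpz]
        have hzval : ((0 : Fin (n+2)) : ℕ) = 0 := rfl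
        have hπ' : ((finRotate (n+1)).symm.trans z.1.2) 0 = z.1.2 (Fin.last n) :=
          rotsymm_zero _
        have hgval : (Function.update z.1.1 (z.1.2 (Fin.last n))
            ⟨(z.1.1 (z.1.2 (Fin.last n)) : ℕ) - 1,
              by have := (z.1.1 (z.1.2 (Fin.last n))).isLt; omega⟩
            (((finRotate (n+1)).symm.trans z.1.2) 0) : ℕ)
            = (z.1.1 (z.1.2 (Fin.last n)) : ℕ) - 1 := by
          rw [hπ', Function.update_self]
        have hg2 : (Function.update z.1.1 (z.1.2 (Fin.last n))
            ⟨(z.1.1 (z.1.2 (Fin.last n)) : ℕ) - 1,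
              by have := (z.1.1 (z.1.2 (Fin.last n))).isLt; omega⟩
            (((finRotate (n+1)).symm.trans z.1.2) 0) : ℕ) + 1 < M := by
          rw [hgval]
          have := (z.1.1 (z.1.2 (Fin.last n))).isLt
          omega
        simp only [pivotJ, dif_pos hzval, dif_pos hg2]
        refine Prod.ext (Prod.ext ?_ ?_) ?_
        · show Function.update _ _ _ = z.1.1
          funext j
          rw [Function.update_apply]
          split_ifs with hj
          · have hj' : j = z.1.2 (Fin.last n) := by rw [hj, hπ']
            apply Fin.ext
            simp only [hgval]
            rw [hj']
            have := hg
            omega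
          · have hj1 : ¬ j = z.1.2 (Fin.last n) := by rw [← hπ']; exact hj
            rw [Function.update_of_ne hj1]
        · show (finRotate (n+1)).trans ((finRotate (n+1)).symm.trans z.1.2) = z.1.2
          ext x
          simp only [Equiv.trans_apply]
          rw [Equiv.symm_apply_apply]
        · show (Fin.last (n+1) : Fin (n+2)) = z.2
          exact (Fin.ext (by rw [hN, Fin.val_last])).symm
      · rw [hpz]
        intro hEq
        have := congrArg (fun w => (w.2 : ℕ)) hEq
        simp only [Fin.val_zero] at this
        omega

end Invol
section Restrict

variable {n M : ℕ}

def permRestrict (π : Equiv.Perm (Fin (n+1))) (hπ : π (Fin.last n) = Fin.last n) :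
    Equiv.Perm (Fin n) where
  toFun j := (π j.castSucc).castPred (by
    intro h
    have h2 := π.injective (h.trans hπ.symm)
    exact (Fin.castSucc_lt_last j).ne h2)
  invFun j := (π.symm j.castSucc).castPred (by
    intro h
    have hsymm : π.symm (Fin.last n) = Fin.last n := by
      rw [Equiv.symm_apply_eq, hπ]
    have h2 := π.symm.injective (h.trans hsymm.symm)
    exact (Fin.castSucc_lt_last j).ne h2)
  left_inv j := by
    apply Fin.ext
    simp only [Fin.castSucc_castPred, Equiv.symm_apply_apply, Fin.coe_castPred,
      Fin.coe_castSucc]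
  right_inv j := by
    apply Fin.ext
    simp only [Fin.castSucc_castPred, Equiv.apply_symm_apply, Fin.coe_castPred,
      Fin.coe_castSucc]

lemma permRestrict_val (π : Equiv.Perm (Fin (n+1))) (hπ : π (Fin.last n) = Fin.last n)
    (j : Fin n) :
    (((permRestrict π hπ) j : Fin n) : ℕ) = ((π j.castSucc : Fin (n+1)) : ℕ) := by
  simp only [permRestrict, Equiv.coe_fn_mk, Fin.coe_castPred]

lemma permRestrict_symm_val (π : Equiv.Perm (Fin (n+1))) (hπ : π (Fin.last n) = Fin.last n)
    (j : Fin n) :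
    (((permRestrict π hπ).symm j : Fin n) : ℕ) = ((π.symm j.castSucc : Fin (n+1)) : ℕ) := by
  simp only [permRestrict, Equiv.coe_fn_symm_mk, Fin.coe_castPred]

def restrS (S : Splx (n+1) M) (hπ : S.2 (Fin.last n) = Fin.last n) : Splx n M :=
  (fun j => S.1 j.castSucc, permRestrict S.2 hπ)

lemma vert_face (S : Splx (n+1) M) (hπ : S.2 (Fin.last n) = Fin.last n)
    (hp : (S.1 (Fin.last n) : ℕ) = 0) (i : Fin (n+1)) :
    vert S (i.castSucc) = Fin.snoc (vert (restrS S hπ) i) 0 := by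
  funext j
  refine Fin.lastCases ?_ ?_ j
  · rw [Fin.snoc_last]
    show (S.1 (Fin.last n) : ℕ) + (if ((S.2.symm (Fin.last n) : ℕ) < ((i.castSucc : Fin (n+2)) : ℕ)) then 1 else 0) = 0
    have hsymm : S.2.symm (Fin.last n) = Fin.last n := by
      rw [Equiv.symm_apply_eq, hπ]
    rw [hsymm, hp, Fin.val_last, Fin.coe_castSucc]
    rw [if_neg (by have := i.isLt; omega)]
  · intro j'
    rw [Fin.snoc_castSucc]
    show (S.1 j'.castSucc : ℕ) + (if ((S.2.symm j'.castSucc : ℕ) < ((i.castSucc : Fin (n+2)) : ℕ)) then 1 else 0)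
      = ((restrS S hπ).1 j' : ℕ) + (if (((restrS S hπ).2.symm j' : ℕ) < (i : ℕ)) then 1 else 0)
    have h1 : ((restrS S hπ).1 j' : ℕ) = (S.1 j'.castSucc : ℕ) := rfl
    have h2 : (((restrS S hπ).2.symm j' : Fin n) : ℕ) = ((S.2.symm j'.castSucc : Fin (n+1)) : ℕ) :=
      permRestrict_symm_val S.2 hπ j'
    rw [h1, h2, Fin.coe_castSucc]

variable (label : (Fin (n+1) → ℕ) → ℕ)

lemma door_last_iff (S : Splx (n+1) M) (hπ : S.2 (Fin.last n) = Fin.last n)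
    (hp : (S.1 (Fin.last n) : ℕ) = 0) :
    IsDoor label S (Fin.last (n+1)) ↔
      IsFull (fun w => label (Fin.snoc w 0)) (restrS S hπ) := by
  constructor
  · intro hd m hm
    obtain ⟨i, hik, hi⟩ := hd m hm
    have hival : (i : ℕ) ≤ n := by
      have h1 := i.isLt
      have h2 : (i:ℕ) ≠ n+1 := fun hh => hik (Fin.ext (by rw [hh, Fin.val_last]))
      omega
    set i₀ : Fin (n+1) := ⟨(i:ℕ), by omega⟩ with hi₀
    have hii : i = i₀.castSucc := Fin.ext (by rw [Fin.coe_castSucc])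
    refine ⟨i₀, ?_⟩
    show label (Fin.snoc (vert (restrS S hπ) i₀) 0) = m
    rw [← vert_face S hπ hp i₀, ← hii]
    exact hi
  · intro hf m hm
    obtain ⟨i₀, hi₀⟩ := hf m hm
    refine ⟨i₀.castSucc, ?_, ?_⟩
    · intro hh
      have := congrArg Fin.val hh
      rw [Fin.coe_castSucc, Fin.val_last] at this
      have := i₀.isLt
      omega
    · rw [vert_face S hπ hp i₀]
      exact hi₀

def permExtend (π : Equiv.Perm (Fin n)) : Equiv.Perm (Fin (n+1)) where
  toFun := Fin.lastCases (Fin.last n) (fun j => (π j).castSucc)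
  invFun := Fin.lastCases (Fin.last n) (fun j => (π.symm j).castSucc)
  left_inv j := by
    induction j using Fin.lastCases with
    | last => simp only [Fin.lastCases_last]
    | cast j' => simp only [Fin.lastCases_castSucc, Equiv.symm_apply_apply]
  right_inv j := by
    induction j using Fin.lastCases with
    | last => simp only [Fin.lastCases_last]
    | cast j' => simp only [Fin.lastCases_castSucc, Equiv.apply_symm_apply]

lemma permExtend_last (π : Equiv.Perm (Fin n)) :
    permExtend π (Fin.last n) = Fin.last n := by
  simp only [permExtend, Equiv.coe_fn_mk, Fin.lastCases_last]

lemma permExtend_castSucc (π : Equiv.Perm (Fin n)) (j : Fin n) :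
    permExtend π j.castSucc = (π j).castSucc := by
  simp only [permExtend, Equiv.coe_fn_mk, Fin.lastCases_castSucc]

lemma permRestrict_extend (π : Equiv.Perm (Fin n)) :
    permRestrict (permExtend π) (permExtend_last π) = π := by
  apply Equiv.ext
  intro j
  apply Fin.ext
  rw [permRestrict_val, permExtend_castSucc, Fin.coe_castSucc]

end Restrict
section KuhnMain

variable {n M : ℕ}

lemma card_B_eq (hM : 0 < M) (label : (Fin (n+1) → ℕ) → ℕ) :
    ((Finset.univ.filter (fun z : Splx (n+1) M × Fin (n+2) =>
        IsDoor label z.1 z.2 ∧ Bcond z)).card)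
      = ((Finset.univ.filter (fun T : Splx n M =>
          IsFull (fun w => label (Fin.snoc w 0)) T)).card) := by
  apply Finset.card_bij (fun z hz => restrS z.1 ((Finset.mem_filter.mp hz).2.2.2.1))
  · -- maps into target
    intro z hz
    obtain ⟨-, hdz, hval, hπ, hp⟩ := Finset.mem_filter.mp hz
    rw [Finset.mem_filter]
    refine ⟨Finset.mem_univ _, ?_⟩
    have hz2 : z.2 = Fin.last (n+1) := Fin.ext (by rw [hval, Fin.val_last])
    rw [hz2] at hdz
    exact (door_last_iff label z.1 hπ hp).mp hdz
  · -- injective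
    intro z hz w hw heq
    obtain ⟨-, -, hzval, hzπ, hzp⟩ := Finset.mem_filter.mp hz
    obtain ⟨-, -, hwval, hwπ, hwp⟩ := Finset.mem_filter.mp hw
    have h1 : z.1.1 = w.1.1 := by
      funext j
      induction j using Fin.lastCases with
      | last =>
        apply Fin.ext
        rw [hzp, hwp]
      | cast j' =>
        have := congrFun (congrArg Prod.fst heq) j'
        exact this
    have h2 : z.1.2 = w.1.2 := by
      apply Equiv.ext
      intro x
      induction x using Fin.lastCases with
      | last => rw [hzπ, hwπ]
      | cast j' =>
        have hc := congrArg (fun (T : Splx n M) => ((T.2 j' : Fin n) : ℕ)) heq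
        simp only [restrS] at hc
        rw [permRestrict_val, permRestrict_val] at hc
        exact Fin.ext hc
    have h3 : z.2 = w.2 := Fin.ext (by rw [hzval, hwval])
    exact Prod.ext (Prod.ext h1 h2) h3
  · -- surjective
    intro T hT
    have hTfull := (Finset.mem_filter.mp hT).2
    refine ⟨((Fin.snoc T.1 (⟨0, hM⟩ : Fin M), permExtend T.2), Fin.last (n+1)), ?_, ?_⟩
    · rw [Finset.mem_filter]
      refine ⟨Finset.mem_univ _, ?_, Fin.val_last _, permExtend_last T.2, ?_⟩
      · -- door
        show IsDoor label (Fin.snoc T.1 (⟨0, hM⟩ : Fin M), permExtend T.2) (Fin.last (n+1))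
        have himg : restrS ((Fin.snoc T.1 (⟨0, hM⟩ : Fin M), permExtend T.2) : Splx (n+1) M)
            (permExtend_last T.2) = T := by
          refine Prod.ext ?_ ?_
          · funext j
            simp only [restrS]
            rw [Fin.snoc_castSucc]
          · exact permRestrict_extend T.2
        refine (door_last_iff label _ (permExtend_last T.2) ?_).mpr ?_
        · simp [Fin.snoc_last]
        · rw [himg]
          exact hTfull
      · simp [Fin.snoc_last]
    · refine Prod.ext ?_ (permRestrict_extend T.2)
      funext j
      simp only [restrS]
      rw [Fin.snoc_castSucc]

theorem kuhn : ∀ (n : ℕ) (M : ℕ), 0 < M → ∀ (label : (Fin n → ℕ) → ℕ),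
    (∀ v, label v ≤ n) →
    (∀ v (j : Fin n), v j = 0 → label v ≠ (j:ℕ)+1) →
    (∀ v (j : Fin n), v j = M → 1 ≤ label v) →
    Odd ((Finset.univ.filter (fun S : Splx n M => IsFull label S)).card) := by
  intro n
  induction n with
  | zero =>
    intro M hM label Hlt H0 H1
    have hall : ∀ S : Splx 0 M, IsFull label S := by
      intro S m hm
      have hm0 : m = 0 := by omega
      subst hm0
      exact ⟨0, by have := Hlt (vert S 0); omega⟩
    rw [Finset.filter_true_of_mem (fun S _ => hall S), Finset.card_univ]
    have hcard : Fintype.card (Splx 0 M) = 1 := by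
      apply Fintype.card_eq_one_iff.mpr
      refine ⟨((fun j => j.elim0), Equiv.refl _), ?_⟩
      intro S
      exact Prod.ext (funext fun j => j.elim0) (Equiv.ext fun j => j.elim0)
    rw [hcard]
    exact ⟨0, rfl⟩
  | succ n ih =>
    intro M hM label Hlt H0 H1
    have Hlt' : ∀ v, (fun w => label (Fin.snoc w 0)) v ≤ n := by
      intro v
      have h1 := H0 (Fin.snoc v 0) (Fin.last n) (by rw [Fin.snoc_last])
      have h2 := Hlt (Fin.snoc v 0)
      rw [Fin.val_last] at h1
      show label (Fin.snoc v 0) ≤ n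
      omega
    have H0' : ∀ v (j : Fin n), v j = 0 → (fun w => label (Fin.snoc w 0)) v ≠ (j:ℕ)+1 := by
      intro v j hv
      have := H0 (Fin.snoc v 0) j.castSucc (by rw [Fin.snoc_castSucc]; exact hv)
      rwa [Fin.coe_castSucc] at this
    have H1' : ∀ v (j : Fin n), v j = M → 1 ≤ (fun w => label (Fin.snoc w 0)) v := by
      intro v j hv
      exact H1 (Fin.snoc v 0) j.castSucc (by rw [Fin.snoc_castSucc]; exact hv)
    have hIH := ih M hM (fun w => label (Fin.snoc w 0)) Hlt' H0' H1'
    -- partition of the doors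
    have hDBC : (Finset.univ.filter (fun z : Splx (n+1) M × Fin (n+2) =>
          IsDoor label z.1 z.2)).card
        = (Finset.univ.filter (fun z : Splx (n+1) M × Fin (n+2) =>
            IsDoor label z.1 z.2 ∧ Bcond z)).card
          + (Finset.univ.filter (fun z : Splx (n+1) M × Fin (n+2) =>
            IsDoor label z.1 z.2 ∧ ¬ Bcond z)).card := by
      have h := Finset.card_filter_add_card_filter_not
        (s := Finset.univ.filter (fun z : Splx (n+1) M × Fin (n+2) => IsDoor label z.1 z.2))
        (p := fun z => Bcond z)
      rw [Finset.filter_filter, Finset.filter_filter] at h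
      exact h.symm
    have hCeven : Even ((Finset.univ.filter (fun z : Splx (n+1) M × Fin (n+2) =>
        IsDoor label z.1 z.2 ∧ ¬ Bcond z)).card) := by
      apply even_card_of_invol _ (pivotJ n M)
      · intro z hz
        obtain ⟨-, hdz, hbz⟩ := Finset.mem_filter.mp hz
        obtain ⟨⟨hd', hb'⟩, -, -⟩ := pivot_props label H0 H1 z hdz hbz
        exact Finset.mem_filter.mpr ⟨Finset.mem_univ _, hd', hb'⟩
      · intro z hz
        obtain ⟨-, hdz, hbz⟩ := Finset.mem_filter.mp hz
        exact (pivot_props label H0 H1 z hdz hbz).2.1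
      · intro z hz
        obtain ⟨-, hdz, hbz⟩ := Finset.mem_filter.mp hz
        exact (pivot_props label H0 H1 z hdz hbz).2.2
    -- door count equals full count mod 2
    have hfib : (Finset.univ.filter (fun z : Splx (n+1) M × Fin (n+2) =>
          IsDoor label z.1 z.2)).card
        = ∑ S ∈ (Finset.univ : Finset (Splx (n+1) M)), ((Finset.univ.filter
            (fun k : Fin (n+2) => IsDoor label S k)).card) := by
      rw [Finset.card_eq_sum_card_fiberwise
        (f := Prod.fst) (t := Finset.univ) (fun z _ => Finset.mem_univ _)]
      apply Finset.sum_congr rfl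
      intro S _
      apply Finset.card_bij (fun z _ => z.2)
      · intro z hz
        rw [Finset.mem_filter] at hz
        obtain ⟨hz1, hz2⟩ := hz
        rw [Finset.mem_filter] at hz1
        refine Finset.mem_filter.mpr ⟨Finset.mem_univ _, ?_⟩
        rw [← hz2]
        exact hz1.2
      · intro z1 hz1 z2 hz2 heq
        have h1 : z1.1 = S := (Finset.mem_filter.mp hz1).2
        have h2 : z2.1 = S := (Finset.mem_filter.mp hz2).2
        exact Prod.ext (h1.trans h2.symm) heq
      · intro k hk
        refine ⟨(S, k), ?_, rfl⟩
        rw [Finset.mem_filter]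
        exact ⟨Finset.mem_filter.mpr ⟨Finset.mem_univ _,
          (Finset.mem_filter.mp hk).2⟩, rfl⟩
    have hDF : (Finset.univ.filter (fun z : Splx (n+1) M × Fin (n+2) =>
          IsDoor label z.1 z.2)).card % 2
        = (Finset.univ.filter (fun S : Splx (n+1) M => IsFull label S)).card % 2 := by
      rw [hfib, Finset.sum_nat_mod]
      have hterm : ∀ S ∈ (Finset.univ : Finset (Splx (n+1) M)),
          (Finset.univ.filter (fun k : Fin (n+2) => IsDoor label S k)).card % 2
            = if IsFull label S then 1 else 0 := by
        intro S _
        by_cases hS : IsFull label S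
        · rw [if_pos hS]
          exact Nat.odd_iff.mp ((odd_doorCount_iff label Hlt S).mpr hS)
        · rw [if_neg hS]
          have hno : ¬ Odd ((Finset.univ.filter
              (fun k : Fin (n+2) => IsDoor label S k)).card) :=
            fun hodd => hS ((odd_doorCount_iff label Hlt S).mp hodd)
          rw [Nat.not_odd_iff_even] at hno
          exact Nat.even_iff.mp hno
      rw [Finset.sum_congr rfl hterm]
      congr 1
      rw [Finset.card_filter]
    have hBF := card_B_eq hM label
    -- conclude
    rw [Nat.odd_iff]
    rw [Nat.odd_iff] at hIH
    obtain ⟨c, hc⟩ := hCeven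
    omega
end KuhnMain
section DiscretePM

lemma vert_eq_or {n M : ℕ} (S : Splx n M) (k : Fin (n+1)) (i : Fin n) :
    vert S k i = (S.1 i : ℕ) ∨ vert S k i = (S.1 i : ℕ) + 1 := by
  by_cases h : ((S.2.symm i : ℕ) < (k:ℕ)) <;> simp [vert, h]

lemma discrete_PM (n M : ℕ) (hM : 0 < M) (σ : Fin n → (Fin n → ℕ) → Prop)
    (Hbot : ∀ v (j : Fin n), v j = 0 → ¬ σ j v)
    (Htop : ∀ v (j : Fin n), v j = M → σ j v) :
    ∃ p : Fin n → ℕ, (∀ j, p j + 1 ≤ M) ∧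
      (∀ j : Fin n,
        (∃ u : Fin n → ℕ, (∀ i, u i = p i ∨ u i = p i + 1) ∧ ¬ σ j u) ∧
        (∃ w : Fin n → ℕ, (∀ i, w i = p i ∨ w i = p i + 1) ∧ σ j w)) := by
  set label : (Fin n → ℕ) → ℕ := fun v =>
    if h : (Finset.univ.filter (fun j : Fin n => σ j v)).Nonempty
    then ((Finset.univ.filter (fun j : Fin n => σ j v)).min' h : Fin n).val + 1 else 0
    with hlabel
  have Hlt : ∀ v, label v ≤ n := by
    intro v; rw [hlabel]; dsimp only
    split_ifs with h
    · have := ((Finset.univ.filter (fun j : Fin n => σ j v)).min' h).isLt; omega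
    · omega
  have H0 : ∀ v (j : Fin n), v j = 0 → label v ≠ (j:ℕ)+1 := by
    intro v j hv he
    rw [hlabel] at he; dsimp only at he
    by_cases h : (Finset.univ.filter (fun j : Fin n => σ j v)).Nonempty
    · rw [dif_pos h] at he
      have hmem := Finset.min'_mem _ h
      have heq : ((Finset.univ.filter (fun j : Fin n => σ j v)).min' h) = j :=
        Fin.ext (by omega)
      rw [heq] at hmem
      exact Hbot v j hv (Finset.mem_filter.mp hmem).2
    · rw [dif_neg h] at he; omega
  have H1 : ∀ v (j : Fin n), v j = M → 1 ≤ label v := by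
    intro v j hv
    have hmem : j ∈ Finset.univ.filter (fun j : Fin n => σ j v) :=
      Finset.mem_filter.mpr ⟨Finset.mem_univ _, Htop v j hv⟩
    rw [hlabel]; dsimp only
    rw [dif_pos ⟨j, hmem⟩]
    omega
  obtain ⟨S, hS⟩ : ∃ S : Splx n M, IsFull label S := by
    have hodd := kuhn n M hM label Hlt H0 H1
    rcases Finset.eq_empty_or_nonempty
        (Finset.univ.filter (fun S : Splx n M => IsFull label S)) with he | hne
    · rw [he] at hodd; simp at hodd
    · obtain ⟨S, hS⟩ := hne
      exact ⟨S, (Finset.mem_filter.mp hS).2⟩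
  refine ⟨fun j => (S.1 j : ℕ), fun j => (S.1 j).isLt, ?_⟩
  intro j
  constructor
  · obtain ⟨k, hk⟩ := hS 0 (by omega)
    refine ⟨vert S k, fun i => vert_eq_or S k i, ?_⟩
    intro hσ
    rw [hlabel] at hk; dsimp only at hk
    rw [dif_pos ⟨j, Finset.mem_filter.mpr ⟨Finset.mem_univ _, hσ⟩⟩] at hk
    omega
  · obtain ⟨k, hk⟩ := hS ((j:ℕ)+1) (by have := j.isLt; omega)
    refine ⟨vert S k, fun i => vert_eq_or S k i, ?_⟩
    rw [hlabel] at hk; dsimp only at hk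
    by_cases h : (Finset.univ.filter (fun j : Fin n => σ j (vert S k))).Nonempty
    · rw [dif_pos h] at hk
      have heq : ((Finset.univ.filter (fun j : Fin n => σ j (vert S k))).min' h) = j :=
        Fin.ext (by omega)
      have hmem := Finset.min'_mem _ h
      rw [heq] at hmem
      exact (Finset.mem_filter.mp hmem).2
    · rw [dif_neg h] at hk; omega

end DiscretePM
section Continuous

/-- Intermediate mean value lemma: if `G : [0,1]^N → ℝ^N` is continuous,
vanishes in its `j`-th component whenever `x_j = 0`, is positive in its `j`-th
component whenever `x_j ≠ 0`, and is order-preserving, then its image contains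
a small cube `[0,η*]^N`. -/
theorem intermediate_mean_value (N : ℕ) (hN : 1 ≤ N)
    (G : (Fin N → ℝ) → (Fin N → ℝ))
    (hcont : ContinuousOn G (Set.Icc 0 1))
    (ha : ∀ x ∈ Set.Icc (0 : Fin N → ℝ) 1, ∀ j, x j = 0 → G x j = 0)
    (hb : ∀ x ∈ Set.Icc (0 : Fin N → ℝ) 1, ∀ j, x j ≠ 0 → 0 < G x j)
    (hmono : ∀ x ∈ Set.Icc (0 : Fin N → ℝ) 1, ∀ y ∈ Set.Icc (0 : Fin N → ℝ) 1,
      y ≤ x → G y ≤ G x) :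
    ∃ η : ℝ, 0 < η ∧
      Set.Icc (0 : Fin N → ℝ) (fun _ => η) ⊆ G '' Set.Icc 0 1 := by
  haveI : Nonempty (Fin N) := ⟨⟨0, hN⟩⟩
  -- the corner points e j
  set e : Fin N → (Fin N → ℝ) := fun j i => if i = j then 1 else 0 with he
  have he_mem : ∀ j, e j ∈ Set.Icc (0 : Fin N → ℝ) 1 := by
    intro j
    constructor <;> intro i <;> simp only [he] <;> split_ifs <;> norm_num
  set η : ℝ := Finset.univ.inf' Finset.univ_nonempty (fun j => G (e j) j) with hη
  have hηpos : 0 < η := by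
    rw [hη, Finset.lt_inf'_iff]
    intro j _
    exact hb (e j) (he_mem j) j (by simp [he])
  have hη_le : ∀ j, η ≤ G (e j) j := by
    intro j
    exact Finset.inf'_le _ (Finset.mem_univ j)
  refine ⟨η, hηpos, ?_⟩
  intro c hc
  obtain ⟨hc0, hc1⟩ := hc
  -- image is compact, hence closed
  have hKcomp : IsCompact (G '' Set.Icc 0 1) := (isCompact_Icc).image_of_continuousOn hcont
  -- approximate solutions suffice
  have happrox : ∀ ε : ℝ, 0 < ε → ∃ y ∈ G '' Set.Icc 0 1, dist c y ≤ ε := by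
    intro ε hε
    -- uniform continuity
    have hUC : UniformContinuousOn G (Set.Icc 0 1) :=
      (isCompact_Icc).uniformContinuousOn_of_continuous hcont
    rw [Metric.uniformContinuousOn_iff_le] at hUC
    obtain ⟨δ, hδ, hUC⟩ := hUC (ε/2) (by positivity)
    -- the shifted target c'
    set ε'' : ℝ := min (ε/2) η with hε''
    have hε''pos : 0 < ε'' := lt_min (by positivity) hηpos
    set c' : Fin N → ℝ := fun j => max (c j) ε'' with hc'
    have hc'lb : ∀ j, ε'' ≤ c' j := fun j => le_max_right _ _
    have hc'ub : ∀ j, c' j ≤ η := fun j => max_le (hc1 j) (min_le_right _ _)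
    have hc'close : ∀ j, |c' j - c j| ≤ ε/2 := by
      intro j
      have hcj : (0:ℝ) ≤ c j := hc0 j
      rw [abs_le]
      constructor
      · have : c j ≤ c' j := le_max_left _ _
        linarith [hε]
      · have h1 : c' j ≤ max (c j) (ε/2) := max_le_max le_rfl (min_le_left _ _)
        have h2 : max (c j) (ε/2) ≤ c j + ε/2 := max_le (by linarith) (by linarith)
        linarith
    -- grid size
    set M : ℕ := max 1 ⌈1/δ⌉₊ with hMdef
    have hM : 0 < M := lt_of_lt_of_le Nat.one_pos (le_max_left _ _)
    have hMR : (0:ℝ) < M := by exact_mod_cast hM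
    have hMδ : 1/(M:ℝ) ≤ δ := by
      have h1 : (1:ℝ)/δ ≤ (⌈1/δ⌉₊ : ℝ) := Nat.le_ceil _
      have h2 : ((⌈1/δ⌉₊ : ℕ) : ℝ) ≤ (M:ℝ) := by
        exact_mod_cast le_max_right 1 ⌈1/δ⌉₊
      have h3 : (1:ℝ)/δ ≤ (M:ℝ) := le_trans h1 h2
      rw [div_le_iff₀ hδ] at h3
      rw [div_le_iff₀ hMR]
      nlinarith
    -- grid points
    set X : (Fin N → ℕ) → (Fin N → ℝ) := fun v i => ((min (v i) M : ℕ) : ℝ)/(M:ℝ) with hX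
    have hXmem : ∀ v, X v ∈ Set.Icc (0 : Fin N → ℝ) 1 := by
      intro v
      constructor <;> intro i
      · show (0:ℝ) ≤ _
        positivity
      · show ((min (v i) M : ℕ) : ℝ)/(M:ℝ) ≤ 1
        rw [div_le_one hMR]
        exact_mod_cast Nat.min_le_right _ _
    -- the sign data
    set σ : Fin N → (Fin N → ℕ) → Prop := fun j v => c' j ≤ G (X v) j with hσ
    have Hbot : ∀ v (j : Fin N), v j = 0 → ¬ σ j v := by
      intro v j hv hs
      have hX0 : X v j = 0 := by
        show ((min (v j) M : ℕ) : ℝ)/(M:ℝ) = 0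
        rw [hv]
        simp
      have hz := ha (X v) (hXmem v) j hX0
      have hs' : c' j ≤ G (X v) j := hs
      rw [hz] at hs'
      have := hc'lb j
      linarith
    have Htop : ∀ v (j : Fin N), v j = M → σ j v := by
      intro v j hv
      have hX1 : X v j = 1 := by
        show ((min (v j) M : ℕ) : ℝ)/(M:ℝ) = 1
        rw [hv, Nat.min_self, div_self (ne_of_gt hMR)]
      have hle : e j ≤ X v := by
        intro i
        simp only [he]
        split_ifs with h
        · rw [h, hX1]
        · exact (hXmem v).1 i
      have hm := hmono (X v) (hXmem v) (e j) (he_mem j) hle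
      show c' j ≤ G (X v) j
      calc c' j ≤ η := hc'ub j
        _ ≤ G (e j) j := hη_le j
        _ ≤ G (X v) j := hm j
    obtain ⟨p, hpM, hcell⟩ := discrete_PM N M hM σ Hbot Htop
    -- the approximate preimage
    have hXdist : ∀ u : Fin N → ℕ, (∀ i, u i = p i ∨ u i = p i + 1) →
        dist (X u) (X p) ≤ 1/(M:ℝ) := by
      intro u hu
      rw [dist_pi_le_iff (by positivity)]
      intro i
      have hle : p i ≤ M := by have := hpM i; omega
      have h2 : min (p i) M = p i := min_eq_left hle
      rcases hu i with h | h
      · show dist (((min (u i) M : ℕ) : ℝ)/(M:ℝ)) (((min (p i) M : ℕ) : ℝ)/(M:ℝ)) ≤ 1/(M:ℝ)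
        rw [h, dist_self]
        positivity
      · show dist (((min (u i) M : ℕ) : ℝ)/(M:ℝ)) (((min (p i) M : ℕ) : ℝ)/(M:ℝ)) ≤ 1/(M:ℝ)
        rw [h]
        have h1 : min (p i + 1) M = p i + 1 := min_eq_left (hpM i)
        rw [h1, h2, Real.dist_eq]
        push_cast
        rw [div_sub_div_same]
        have hnum : ((p i:ℝ) + 1) - (p i:ℝ) = 1 := by ring
        rw [hnum, abs_of_nonneg (by positivity)]
    have hGdist : ∀ u : Fin N → ℕ, (∀ i, u i = p i ∨ u i = p i + 1) →
        ∀ j, |G (X u) j - G (X p) j| ≤ ε/2 := by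
      intro u hu j
      have h1 := hUC (X u) (hXmem u) (X p) (hXmem p) (le_trans (hXdist u hu) hMδ)
      have h2 : dist (G (X u) j) (G (X p) j) ≤ dist (G (X u)) (G (X p)) :=
        dist_le_pi_dist _ _ j
      rw [Real.dist_eq] at h2
      linarith
    refine ⟨G (X p), ⟨X p, hXmem p, rfl⟩, ?_⟩
    rw [dist_pi_le_iff (le_of_lt hε)]
    intro j
    obtain ⟨⟨u, hu, hσu⟩, ⟨w, hw, hσw⟩⟩ := hcell j
    have hσu' : G (X u) j < c' j := not_le.mp hσu
    have hσw' : c' j ≤ G (X w) j := hσw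
    have hu2 := hGdist u hu j
    have hw2 := hGdist w hw j
    have hcc := hc'close j
    rw [Real.dist_eq, abs_le]
    rw [abs_le] at hu2 hw2 hcc
    constructor <;> [linarith [hσu', hσw'] ; linarith [hσu', hσw']]
  -- pass to the limit
  have hclosure : c ∈ closure (G '' Set.Icc 0 1) := by
    rw [Metric.mem_closure_iff]
    intro ε hε
    obtain ⟨y, hy, hdy⟩ := happrox (ε/2) (by positivity)
    exact ⟨y, hy, lt_of_le_of_lt hdy (by linarith)⟩
  rwa [hKcomp.isClosed.closure_eq] at hclosure

end Continuous
end

section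
/- Let μ > 0, δ_0 > 0, and let f : ℝ → ℝ be C^1 with f(0) = 0 and f'(u) ≤ −μ for all u ∈ [0, δ_0]. If u : ℝ^d → ℝ is a bounded C^2 solution of Δu + f(u) = 0 on ℝ^d satisfying 0 ≤ u ≤ δ_0, then u ≡ 0. -/
open Filter Set Topology

/-- Second derivative test at a local maximum: if `g` has derivative `g'` everywhere,
`g'` has derivative `a` at `0`, and `0` is a local max of `g`, then `a ≤ 0`. -/
lemma second_deriv_nonpos_of_isLocalMax (g g' : ℝ → ℝ) (a : ℝ)
    (hg : ∀ t, HasDerivAt g (g' t) t) (hg' : HasDerivAt g' a 0)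
    (hmax : IsLocalMax g 0) : a ≤ 0 := by
  by_contra hpos
  push_neg at hpos
  have h0 : g' 0 = 0 := by
    have h1 : deriv g 0 = g' 0 := (hg 0).deriv
    have h2 := hmax.deriv_eq_zero
    rw [h1] at h2; exact h2
  -- slope of g' at 0 tends to a > 0
  have hslope : Tendsto (slope g' 0) (𝓝[≠] 0) (𝓝 a) :=
    hasDerivAt_iff_tendsto_slope.1 hg'
  have hev : ∀ᶠ t in 𝓝[>] (0:ℝ), 0 < g' t := by
    have h1 : ∀ᶠ t in 𝓝[≠] (0:ℝ), 0 < slope g' 0 t :=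
      hslope.eventually_const_lt hpos
    have h2 : ∀ᶠ t in 𝓝[>] (0:ℝ), 0 < slope g' 0 t :=
      h1.filter_mono (nhdsWithin_mono 0 fun t ht => ne_of_gt ht)
    have h3 : ∀ᶠ t in 𝓝[>] (0:ℝ), (0:ℝ) < t := eventually_mem_nhdsWithin
    filter_upwards [h2, h3] with t h2t h3t
    have : slope g' 0 t = g' t / t := by
      simp [slope_def_field, h0]
    rw [this] at h2t
    have := mul_pos h2t h3t
    rwa [div_mul_cancel₀ _ (ne_of_gt h3t)] at this
  have hmaxev : ∀ᶠ t in 𝓝[>] (0:ℝ), g t ≤ g 0 :=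
    (hmax.filter_mono nhdsWithin_le_nhds)
  obtain ⟨b, hb, hIoo⟩ := (mem_nhdsGT_iff_exists_Ioo_subset).1 (hev.and hmaxev)
  set c := b / 2 + 0 with hc
  have hcIoo : c ∈ Ioo (0:ℝ) b := by
    constructor <;> simp [hc] <;> linarith [hb.out]
  have hmono : StrictMonoOn g (Icc 0 c) := by
    apply strictMonoOn_of_deriv_pos (convex_Icc 0 c)
    · exact Continuous.continuousOn (continuous_iff_continuousAt.2
        fun t => (hg t).continuousAt)
    · intro t ht
      rw [interior_Icc] at ht
      have htI : t ∈ Ioo (0:ℝ) b := ⟨ht.1, lt_of_lt_of_le ht.2 (by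
        have := hcIoo.2; linarith)⟩
      rw [(hg t).deriv]
      exact (hIoo htI).1
  have h1 : g 0 < g c := hmono ⟨le_refl 0, le_of_lt hcIoo.1⟩
    ⟨le_of_lt hcIoo.1, le_refl c⟩ hcIoo.1
  have h2 : g c ≤ g 0 := (hIoo hcIoo).2
  linarith

/-- MVT consequence: `f s ≤ -μ s` on `[0, δ₀]`. -/
lemma f_le_of_deriv_le (μ δ₀ : ℝ) (f : ℝ → ℝ) (hf : ContDiff ℝ 1 f) (hf0 : f 0 = 0)
    (hf' : ∀ s ∈ Set.Icc (0 : ℝ) δ₀, deriv f s ≤ -μ) :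
    ∀ s ∈ Set.Icc (0 : ℝ) δ₀, f s ≤ -μ * s := by
  intro s hs
  rcases eq_or_lt_of_le hs.1 with h | h
  · simp [← h, hf0]
  · obtain ⟨c, hc, hceq⟩ := exists_deriv_eq_slope f h
      (hf.continuous.continuousOn)
      ((hf.differentiable (by norm_num)).differentiableOn)
    have hcmem : c ∈ Set.Icc (0:ℝ) δ₀ := ⟨le_of_lt hc.1, le_trans (le_of_lt hc.2) hs.2⟩
    have := hf' c hcmem
    rw [hceq, hf0, sub_zero, sub_zero] at this
    have hs0 : (0:ℝ) < s := h
    calc f s = (f s / s) * s := by field_simp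
    _ ≤ -μ * s := mul_le_mul_of_nonneg_right this (le_of_lt hs0)

/-- If `f(0) = 0`, `f' ≤ -μ < 0` on `[0, δ₀]`, and `u` is a bounded `C²` solution of
`Δu + f(u) = 0` on `ℝ^d` with `0 ≤ u ≤ δ₀`, then `u ≡ 0`. -/
theorem trapped_stationary_solution_is_zero (d : ℕ) (μ δ₀ : ℝ) (hμ : 0 < μ) (hδ : 0 < δ₀)
    (f : ℝ → ℝ) (hf : ContDiff ℝ 1 f) (hf0 : f 0 = 0)
    (hf' : ∀ s ∈ Set.Icc (0 : ℝ) δ₀, deriv f s ≤ -μ)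
    (u : EuclideanSpace ℝ (Fin d) → ℝ) (hu : ContDiff ℝ 2 u)
    (hbd : ∀ x, u x ∈ Set.Icc (0 : ℝ) δ₀)
    (heq : ∀ x, (∑ i, fderiv ℝ (fun y => fderiv ℝ u y (EuclideanSpace.single i (1 : ℝ))) x
        (EuclideanSpace.single i (1 : ℝ))) + f (u x) = 0) :
    ∀ x, u x = 0 := by
  intro x₀
  have hflin := f_le_of_deriv_le μ δ₀ f hf hf0 hf'
  -- key claim:
  have key : ∀ ε > (0:ℝ), μ * u x₀ ≤ 2 * d * ε := by
    intro ε hε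
    set q : EuclideanSpace ℝ (Fin d) → ℝ := fun x => ∑ i, (x i - x₀ i)^2 with hq
    set φ : EuclideanSpace ℝ (Fin d) → ℝ := fun x => u x - ε * q x with hφ
    have hqnorm : ∀ x, q x = ‖x - x₀‖^2 := by
      intro x
      rw [EuclideanSpace.norm_eq, Real.sq_sqrt (by positivity)]
      simp [hq, sq_abs]
    have hqcont : Continuous q := by
      apply continuous_finset_sum
      intro i _
      exact ((continuous_apply i).comp (by exact PiLp.continuous_ofLp 2 (fun _ : Fin d => ℝ))
        |>.sub continuous_const).pow 2
    have hφcont : Continuous φ := (hu.continuous).sub (continuous_const.mul hqcont)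
    have hφbot : Tendsto φ (cocompact _) atBot := by
      have hb1 : ∀ x, φ x ≤ δ₀ - ε * ‖x - x₀‖^2 := by
        intro x
        rw [hφ]
        simp only
        rw [hqnorm x]
        have := (hbd x).2
        nlinarith [sq_nonneg ‖x - x₀‖]
      have h1 : Tendsto (fun x : EuclideanSpace ℝ (Fin d) => ‖x - x₀‖)
          (cocompact _) atTop := by
          refine tendsto_atTop_mono (fun x => ?_)
            (tendsto_atTop_add_const_right _ (-‖x₀‖) tendsto_norm_cocompact_atTop)
          have := norm_sub_norm_le x x₀
          linarith
      have hT : Tendsto (fun x : EuclideanSpace ℝ (Fin d) => ‖x - x₀‖ ^ 2)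
          (cocompact _) atTop := (tendsto_pow_atTop (by norm_num)).comp h1
      have h2 := hT.const_mul_atTop hε
      have h3 : Tendsto (fun x : EuclideanSpace ℝ (Fin d) => -(ε * ‖x - x₀‖ ^ 2))
          (cocompact _) atBot := tendsto_neg_atTop_atBot.comp h2
      have h4 := tendsto_atBot_add_const_left _ δ₀ h3
      refine tendsto_atBot_mono hb1 ?_
      simpa [sub_eq_add_neg] using h4
    obtain ⟨z, hz⟩ := hφcont.exists_forall_ge hφbot
    -- second derivative bound at z
    have hsec : ∀ i : Fin d,
        fderiv ℝ (fun y => fderiv ℝ u y (EuclideanSpace.single i (1 : ℝ))) z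
          (EuclideanSpace.single i (1 : ℝ)) ≤ 2 * ε := by
      intro i
      set e : EuclideanSpace ℝ (Fin d) := EuclideanSpace.single i (1:ℝ) with he
      set c : ℝ → EuclideanSpace ℝ (Fin d) := fun t => z + t • e with hcdef
      have hc : ∀ t, HasDerivAt c e t := by
        intro t
        have h1 : HasDerivAt (fun t : ℝ => t • e) ((1:ℝ) • e) t :=
          (hasDerivAt_id t).smul_const e
        rw [one_smul] at h1
        exact h1.const_add z
      have hc0 : c 0 = z := by simp [hcdef]
      have hudiff : Differentiable ℝ u := hu.differentiable (by norm_num)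
      set U' : ℝ → ℝ := fun t => fderiv ℝ u (c t) e with hU'def
      have hU : ∀ t, HasDerivAt (fun t => u (c t)) (U' t) t := fun t =>
        (hudiff (c t)).hasFDerivAt.comp_hasDerivAt t (hc t)
      have hFdiff : Differentiable ℝ (fun y => fderiv ℝ u y e) := by
        have h1 : ContDiff ℝ 1 (fderiv ℝ u) := hu.fderiv_right (by norm_num)
        exact (ContinuousLinearMap.apply ℝ ℝ e).differentiable.comp (h1.differentiable (by norm_num))
      have hU' : HasDerivAt U' (fderiv ℝ (fun y => fderiv ℝ u y e) z e) 0 := by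
        have h1 : HasFDerivAt (fun y => fderiv ℝ u y e)
            (fderiv ℝ (fun y => fderiv ℝ u y e) (c 0)) (c 0) :=
          (hFdiff (c 0)).hasFDerivAt
        have h2 := h1.comp_hasDerivAt 0 (hc 0)
        rw [hc0] at h2
        exact h2
      -- the quadratic part
      have hcj : ∀ t (j : Fin d), c t j = z j + t * (if j = i then 1 else 0) := by
        intro t j
        simp [hcdef, he, EuclideanSpace.single_apply]
      have hQ : ∀ t, HasDerivAt (fun t => q (c t)) (2 * (z i + t - x₀ i)) t := by
        intro t
        have h1 : ∀ j : Fin d, HasDerivAt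
            (fun t : ℝ => (z j + t * (if j = i then 1 else 0) - x₀ j)^2)
            (2 * (z j + t * (if j = i then 1 else 0) - x₀ j) * (if j = i then 1 else 0)) t := by
          intro j
          have h2 : HasDerivAt (fun t : ℝ => z j + t * (if j = i then 1 else 0) - x₀ j)
              (if j = i then 1 else 0) t := by
            have := ((hasDerivAt_id t).mul_const (if j = i then (1:ℝ) else 0)).const_add (z j)
            simpa using this.sub_const (x₀ j)
          have h3 := h2.fun_pow 2
          simpa [mul_comm, mul_assoc, mul_left_comm] using h3
        have h4 := HasDerivAt.fun_sum (u := Finset.univ) (fun j _ => h1 j)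
        have h5 : ∀ t', q (c t') = ∑ j, (z j + t' * (if j = i then 1 else 0) - x₀ j)^2 := by
          intro t'
          simp only [hq]
          exact Finset.sum_congr rfl fun j _ => by rw [hcj t' j]
        have h6 : (∑ j, 2 * (z j + t * (if j = i then 1 else 0) - x₀ j) *
            (if j = i then 1 else 0)) = 2 * (z i + t - x₀ i) := by
          rw [Finset.sum_eq_single i]
          · simp
          · intro j _ hji; simp [hji]
          · simp
        rw [← h6]
        have h7 : (fun t' => q (c t')) =
            fun t' => ∑ j, (z j + t' * (if j = i then 1 else 0) - x₀ j)^2 :=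
          funext h5
        rw [h7]
        exact h4
      -- assemble g
      set g : ℝ → ℝ := fun t => u (c t) - ε * q (c t) with hgdef
      set g' : ℝ → ℝ := fun t => U' t - ε * (2 * (z i + t - x₀ i)) with hg'def
      have hg : ∀ t, HasDerivAt g (g' t) t := fun t => (hU t).sub ((hQ t).const_mul ε)
      have hg' : HasDerivAt g' (fderiv ℝ (fun y => fderiv ℝ u y e) z e - ε * 2) 0 := by
        have h1 : HasDerivAt (fun t : ℝ => 2 * (z i + t - x₀ i)) 2 0 := by
          have h2 : HasDerivAt (fun t : ℝ => z i + t - x₀ i) 1 0 :=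
            ((hasDerivAt_id 0).const_add (z i)).sub_const (x₀ i)
          simpa [mul_comm] using h2.const_mul (2:ℝ)
        exact hU'.sub (h1.const_mul ε)
      have hmax : IsLocalMax g 0 := by
        refine Filter.Eventually.of_forall fun t => ?_
        have h1 : g t = φ (c t) := rfl
        have h2 : g 0 = φ (c 0) := rfl
        rw [h1, h2, hc0]
        exact hz (c t)
      have := second_deriv_nonpos_of_isLocalMax g g' _ hg hg' hmax
      linarith
    -- sum over i
    have hsum : (∑ i, fderiv ℝ (fun y => fderiv ℝ u y (EuclideanSpace.single i (1 : ℝ))) z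
        (EuclideanSpace.single i (1 : ℝ))) ≤ d * (2 * ε) := by
      calc (∑ i : Fin d, fderiv ℝ (fun y => fderiv ℝ u y (EuclideanSpace.single i (1 : ℝ))) z
          (EuclideanSpace.single i (1 : ℝ))) ≤ ∑ _i : Fin d, 2 * ε :=
            Finset.sum_le_sum fun i _ => hsec i
      _ = d * (2 * ε) := by simp [Finset.sum_const, mul_comm]
    have hzeq := heq z
    have hfz : f (u z) ≤ -μ * u z := hflin (u z) (hbd z)
    have huz : μ * u z ≤ 2 * d * ε := by nlinarith
    -- u x₀ ≤ u z
    have hx₀z : u x₀ ≤ u z := by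
      have h1 : φ x₀ ≤ φ z := hz x₀
      have h2 : q x₀ = 0 := by simp [hq]
      have h3 : 0 ≤ q z := Finset.sum_nonneg fun j _ => sq_nonneg _
      simp only [hφ] at h1
      nlinarith
    nlinarith [(hbd z).1]
  -- conclude
  have h1 : μ * u x₀ ≤ 0 := by
    by_contra h
    push_neg at h
    have := key (μ * u x₀ / (2 * d + 1)) (by positivity)
    have hd : (0:ℝ) ≤ d := Nat.cast_nonneg d
    have hpos : (0:ℝ) < 2 * d + 1 := by positivity
    have hdiv : μ * u x₀ / (2 * ↑d + 1) * (2 * ↑d + 1) = μ * u x₀ :=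
      div_mul_cancel₀ _ (ne_of_gt hpos)
    nlinarith
  have h2 : 0 ≤ u x₀ := (hbd x₀).1
  nlinarith
end
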